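/- Eager-scope λ-ho-term-graphs over the same underlying term graph are unique: if P₁ and P₂ are correct abstraction-prefix functions for the same underlying term graph such that both resulting λ-ho-term-graphs are eager-scope, then P₁ = P₂. -/

import Mathlib

/-- A (root-connected) term graph over signature `Sig` with arity function `ar`,
    with vertex type `V`. -/
structure TermGraph (Sig : Type) (ar : Sig → ℕ) (V : Type) where
  lab : V → Sig
  args : V → List V
  root : V
  arity_ok : ∀ v, (args v).length = ar (lab v)
  rooted : ∀ v, Relation.ReflTransGen (fun a b => b ∈ args a) root v

/-- `R` is a bisimulation between term graphs `G₁` and `G₂`. -/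
def IsBisim {Sig : Type} {ar : Sig → ℕ} {V₁ V₂ : Type}
    (G₁ : TermGraph Sig ar V₁) (G₂ : TermGraph Sig ar V₂)
    (R : V₁ → V₂ → Prop) : Prop :=
  R G₁.root G₂.root ∧
  (∀ v w, R v w → G₁.lab v = G₂.lab w) ∧
  (∀ v w, R v w → List.Forall₂ R (G₁.args v) (G₂.args w))

/-- `G₁` and `G₂` are bisimilar. -/
def Bisim {Sig : Type} {ar : Sig → ℕ} {V₁ V₂ : Type}
    (G₁ : TermGraph Sig ar V₁) (G₂ : TermGraph Sig ar V₂) : Prop :=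
  ∃ R, IsBisim G₁ G₂ R

/-- `h` is a homomorphism of term graphs: it maps root to root, preserves labels,
    and commutes with the argument function. -/
def IsHom {Sig : Type} {ar : Sig → ℕ} {V₁ V₂ : Type}
    (G₁ : TermGraph Sig ar V₁) (G₂ : TermGraph Sig ar V₂) (h : V₁ → V₂) : Prop :=
  h G₁.root = G₂.root ∧
  (∀ v, G₂.lab (h v) = G₁.lab v) ∧
  (∀ v, G₂.args (h v) = (G₁.args v).map h)

/-- There exists a functional bisimulation (homomorphism) from `G₁` to `G₂`. -/
def FunBisim {Sig : Type} {ar : Sig → ℕ} {V₁ V₂ : Type}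
    (G₁ : TermGraph Sig ar V₁) (G₂ : TermGraph Sig ar V₂) : Prop :=
  ∃ h, IsHom G₁ G₂ h

/-- The signature for lambda higher-order term graphs:
    application, abstraction, variable occurrence, black hole. -/
inductive HoSig : Type
  | app | lam | var | bh
deriving DecidableEq

/-- Arities for the higher-order lambda signature. -/
def arH : HoSig → ℕ
  | .app => 2
  | .lam => 1
  | .var => 1
  | .bh  => 0

/-- A correct abstraction-prefix function for a term graph over the higher-order
    lambda signature (the data of a lambda higher-order term graph). -/
structure CorrectPrefixHo {V : Type} (G : TermGraph HoSig arH V)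
    (P : V → List V) : Prop where
  root : P G.root = []
  blackhole : ∀ v, G.lab v = HoSig.bh → P v = []
  lamCond : ∀ w v, G.lab w = HoSig.lam → (G.args w)[0]? = some v →
    P v <+: P w ++ [w]
  appCond : ∀ w v (k : ℕ), G.lab w = HoSig.app → (G.args w)[k]? = some v →
    P v <+: P w
  varCond : ∀ w v, G.lab w = HoSig.var → (G.args w)[0]? = some v →
    G.lab v = HoSig.lam ∧ P v ++ [v] = P w

/-- Eager scope: for every vertex whose abstraction prefix ends in an abstraction
    vertex, there is a path to that abstraction vertex passing only through vertices
    whose prefixes extend the prefix of the starting vertex, whose last step goes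
    from a variable vertex to the abstraction vertex. -/
def EagerScope {V : Type} (G : TermGraph HoSig arH V) (P : V → List V) : Prop :=
  ∀ w p v, P w = p ++ [v] →
    ∃ ws : List V, ws.head? = some w ∧
      List.Chain' (fun a b => b ∈ G.args a) ws ∧
      (∀ u ∈ ws.tail, P w <+: P u) ∧
      ∃ wm, ws.getLast? = some wm ∧ G.lab wm = HoSig.var ∧
        (G.args wm)[0]? = some v

namespace EagerAux

variable {V : Type}

lemma good_prefix {P : V → List V} {l' l : List V} (hp : l' <+: l)
    (hl : ∀ i v, l[i]? = some v → l.take i = P v) :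
    ∀ i v, l'[i]? = some v → l'.take i = P v := by
  obtain ⟨t, rfl⟩ := hp
  intro i v hv
  have hi : i < l'.length := by
    by_contra hge
    rw [List.getElem?_eq_none (Nat.le_of_not_lt hge)] at hv
    exact nomatch hv
  have := hl i v (by rw [List.getElem?_append_left hi]; exact hv)
  rw [List.take_append_of_le_length (Nat.le_of_lt hi)] at this
  exact this

lemma good_snoc {P : V → List V} {l : List V} {b : V} (hb : P b = l)
    (hl : ∀ i v, l[i]? = some v → l.take i = P v) :
    ∀ i v, (l ++ [b])[i]? = some v → (l ++ [b]).take i = P v := by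
  intro i v hv
  rcases Nat.lt_or_ge i l.length with hi | hi
  · rw [List.getElem?_append_left hi] at hv
    rw [List.take_append_of_le_length (Nat.le_of_lt hi)]
    exact hl i v hv
  · have hi2 : i < l.length + 1 := by
      by_contra hge
      rw [List.getElem?_eq_none (by simpa using Nat.le_of_not_lt hge)] at hv
      exact nomatch hv
    have hieq : i = l.length := by omega
    subst hieq
    rw [List.getElem?_concat_length] at hv
    rw [List.take_append_of_le_length le_rfl, List.take_length, ← hb]
    exact congrArg P (Option.some.inj hv)

variable (G : TermGraph HoSig arH V)

lemma edge_pre {P : V → List V} (h : CorrectPrefixHo G P)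
    {a b : V} (hb : b ∈ G.args a) : P b <+: P a ++ [a] := by
  obtain ⟨k, hk⟩ := List.mem_iff_getElem?.mp hb
  have hlen : (G.args a).length = arH (G.lab a) := G.arity_ok a
  have hklt : k < (G.args a).length := by
    by_contra hge
    rw [List.getElem?_eq_none (Nat.le_of_not_lt hge)] at hk
    exact nomatch hk
  cases hl : G.lab a with
  | app => exact (h.appCond a b k hl hk).trans (List.prefix_append _ _)
  | lam =>
    have hk0 : k = 0 := by rw [hl] at hlen; simp [arH] at hlen; omega
    exact h.lamCond a b hl (hk0 ▸ hk)
  | var =>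
    have hk0 : k = 0 := by rw [hl] at hlen; simp [arH] at hlen; omega
    have hv := (h.varCond a b hl (hk0 ▸ hk)).2
    have h2 : P b <+: P a := hv ▸ List.prefix_append (P b) [b]
    exact h2.trans (List.prefix_append _ _)
  | bh =>
    rw [hl] at hlen; simp [arH] at hlen
    rw [hlen] at hk; simp at hk

lemma take_eq {P : V → List V} (h : CorrectPrefixHo G P) :
    ∀ w i v, (P w)[i]? = some v → (P w).take i = P v := by
  have key : ∀ u, Relation.ReflTransGen (fun a b => b ∈ G.args a) G.root u →
      ∀ i v, (P u)[i]? = some v → (P u).take i = P v := by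
    intro u hu
    induction hu with
    | refl => intro i v hv; rw [h.root] at hv; simp at hv
    | @tail b c _ hbc ih =>
      exact good_prefix (edge_pre G h hbc) (good_snoc rfl ih)
  intro w i v hv
  exact key w (G.rooted w) i v hv

lemma concat_last {P : V → List V} (h : CorrectPrefixHo G P)
    {w : V} {p : List V} {v : V} (hw : P w = p ++ [v]) : P w = P v ++ [v] := by
  have h1 : (P w)[p.length]? = some v := by rw [hw]; exact List.getElem?_concat_length (l := p) (a := v)
  have h2 := take_eq G h w p.length v h1
  rw [hw, List.take_append_of_le_length le_rfl, List.take_length] at h2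
  rw [hw, ← h2]

lemma chain_mem {P : V → List V} (h : CorrectPrefixHo G P) :
    ∀ ws : List V, List.Chain' (fun a b => b ∈ G.args a) ws →
      ∀ w wm x, ws.head? = some w → ws.getLast? = some wm →
        x ∈ P wm → x ∈ P w ∨ x ∈ ws := by
  intro ws
  induction ws with
  | nil => intro _ w wm x hw; simp at hw
  | cons a t ih =>
    cases t with
    | nil =>
      intro _ w wm x hw hwm hx
      simp at hw hwm
      subst hw; subst hwm
      exact Or.inl hx
    | cons b t' =>
      intro hc w wm x hw hwm hx
      have hab : b ∈ G.args a := (List.isChain_cons_cons.mp hc).1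
      have hc' := (List.isChain_cons_cons.mp hc).2
      have hw' : w = a := by simpa using hw.symm
      subst hw'
      have hlast : (b :: t').getLast? = some wm := by
        rw [List.getLast?_cons_cons] at hwm; exact hwm
      rcases ih hc' b wm x rfl hlast hx with hb | hb
      · have := (edge_pre G h hab).subset hb
        rcases List.mem_append.mp this with h1 | h1
        · exact Or.inl h1
        · simp at h1; subst h1
          exact Or.inr (List.mem_cons_self)
      · exact Or.inr (List.mem_cons_of_mem _ hb)

lemma last_mem {P Q : V → List V} (hP : CorrectPrefixHo G P) (hQ : CorrectPrefixHo G Q)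
    (eQ : EagerScope G Q) {w : V} {p : List V} {v : V} (hw : Q w = p ++ [v]) :
    v ∈ P w := by
  obtain ⟨ws, hhead, hchain, htail, wm, hlast, hvar, harg⟩ := eQ w p v hw
  have hpv := (hP.varCond wm v hvar harg).2
  have hvm : v ∈ P wm := by rw [← hpv]; simp
  have hQw : Q w = Q v ++ [v] := concat_last G hQ hw
  rcases chain_mem G hP ws hchain w wm v hhead hlast hvm with hl | hr
  · exact hl
  · exfalso
    obtain ⟨a, t, rfl⟩ : ∃ a t, ws = a :: t := by
      cases ws with
      | nil => simp at hhead
      | cons a t => exact ⟨a, t, rfl⟩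
    have haw : a = w := by simpa using hhead
    subst haw
    rcases List.mem_cons.mp hr with rfl | hvt
    · have := congrArg List.length hQw; simp at this
    · have hpre := htail v hvt
      have hle := hpre.length_le
      rw [hQw] at hle; simp at hle

lemma mem_index {P : V → List V} (h : CorrectPrefixHo G P) {w x : V}
    (hx : x ∈ P w) : (P x).length < (P w).length ∧
      (P w)[(P x).length]? = some x := by
  obtain ⟨i, hiv⟩ := List.mem_iff_getElem?.mp hx
  have hi : i < (P w).length := by
    by_contra hge
    rw [List.getElem?_eq_none (Nat.le_of_not_lt hge)] at hiv
    exact nomatch hiv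
  have ht := take_eq G h w i x hiv
  have hlen : (P x).length = i := by
    rw [← ht, List.length_take]; omega
  rw [hlen]
  exact ⟨hi, hiv⟩

end EagerAux

/-- Uniqueness of eager-scope lambda higher-order term graphs over the same
    underlying term graph: two correct abstraction-prefix functions that are both
    eager-scope coincide. -/
theorem eagerScope_prefix_unique {V : Type} (G : TermGraph HoSig arH V)
    (P₁ P₂ : V → List V)
    (h₁ : CorrectPrefixHo G P₁) (h₂ : CorrectPrefixHo G P₂)
    (e₁ : EagerScope G P₁) (e₂ : EagerScope G P₂) : P₁ = P₂ := by
  suffices key : ∀ n w, (P₁ w).length + (P₂ w).length ≤ n → P₁ w = P₂ w by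
    funext w
    exact key _ w le_rfl
  intro n
  induction n with
  | zero =>
    intro w hw
    have l1 : P₁ w = [] := List.eq_nil_of_length_eq_zero (by omega)
    have l2 : P₂ w = [] := List.eq_nil_of_length_eq_zero (by omega)
    rw [l1, l2]
  | succ n ih =>
    intro w hw
    rcases List.eq_nil_or_concat (P₂ w) with h2e | ⟨p₂, v, hv⟩
    on_goal 2 => rw [List.concat_eq_append] at hv
    · rcases List.eq_nil_or_concat (P₁ w) with h1e | ⟨p₁, v', hv'⟩
      · rw [h1e, h2e]
      · rw [List.concat_eq_append] at hv'
        exfalso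
        have := EagerAux.last_mem G h₂ h₁ e₁ hv'
        rw [h2e] at this; simp at this
    · have hvmem : v ∈ P₁ w := EagerAux.last_mem G h₁ h₂ e₂ hv
      rcases List.eq_nil_or_concat (P₁ w) with h1e | ⟨p₁, v', hv'⟩
      · rw [h1e] at hvmem; simp at hvmem
      rw [List.concat_eq_append] at hv'
      · have hv'mem : v' ∈ P₂ w := EagerAux.last_mem G h₂ h₁ e₁ hv'
        have hQ2 : P₂ w = P₂ v ++ [v] := EagerAux.concat_last G h₂ hv
        have hQ1 : P₁ w = P₁ v' ++ [v'] := EagerAux.concat_last G h₁ hv'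
        obtain ⟨hi1, hi1v⟩ := EagerAux.mem_index G h₁ hvmem
        obtain ⟨hj2, hj2v⟩ := EagerAux.mem_index G h₂ hv'mem
        -- lengths
        have hl2 : (P₂ v).length + 1 = (P₂ w).length := by rw [hQ2]; simp
        have hl1 : (P₁ v').length + 1 = (P₁ w).length := by rw [hQ1]; simp
        have hPv : P₁ v = P₂ v := ih v (by omega)
        have hPv' : P₁ v' = P₂ v' := ih v' (by omega)
        by_cases hvv : v = v'
        · subst hvv
          rw [hQ1, hQ2, hPv]
        · exfalso
          -- v occurs in P₁ w = P₁ v' ++ [v'] at index (P₁ v).length, not last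
          have hlt1 : (P₁ v).length < (P₁ v').length := by
            rcases Nat.lt_or_ge (P₁ v).length (P₁ v').length with h | h
            · exact h
            · exfalso
              have : (P₁ v).length = (P₁ v').length := by omega
              rw [hQ1, this, List.getElem?_concat_length] at hi1v
              exact hvv (Option.some.inj hi1v).symm
          have hlt2 : (P₂ v').length < (P₂ v).length := by
            rcases Nat.lt_or_ge (P₂ v').length (P₂ v).length with h | h
            · exact h
            · exfalso
              have : (P₂ v').length = (P₂ v).length := by omega
              rw [hQ2, this, List.getElem?_concat_length] at hj2v
              exact hvv (Option.some.inj hj2v)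
          have := congrArg List.length hPv
          have := congrArg List.length hPv'
          omega
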